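/- For every nonempty proper subset A ⊊ X, the series ∑_{n=0}^∞ (P_A)^n converges entrywise, the matrix I_A − P_A is invertible, and (I_A − P_A)^{-1} = ∑_{n=0}^∞ (P_A)^n. -/

import Mathlib

open Matrix Finset

section Abstract

attribute [local instance] Matrix.linftyOpNormedRing Matrix.linftyOpNormedSpace

variable {ι : Type*} [Fintype ι] [DecidableEq ι] [Nonempty ι]

@[local instance]
noncomputable def matCompl : CompleteSpace (Matrix ι ι ℝ) :=
  (inferInstanceAs (CompleteSpace (ι → ι → ℝ)))

omit [Nonempty ι] in
/-- entry evaluation is bounded by the linfty norm -/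
theorem entry_le_norm (M : Matrix ι ι ℝ) (i j : ι) : ‖M i j‖ ≤ ‖M‖ := by
  have h1 : ‖M i j‖₊ ≤ ∑ k, ‖M i k‖₊ :=
    Finset.single_le_sum (f := fun k => ‖M i k‖₊) (fun k _ => zero_le) (Finset.mem_univ j)
  have h2 : (∑ k, ‖M i k‖₊) ≤ ‖M‖₊ := by
    rw [Matrix.linfty_opNNNorm_def]
    exact Finset.le_sup (f := fun i : ι => ∑ k, ‖M i k‖₊) (Finset.mem_univ i)
  exact_mod_cast h1.trans h2

theorem norm_eq_of_nonneg (M : Matrix ι ι ℝ) (h : ∀ i j, 0 ≤ M i j) :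
    ∃ i : ι, ‖M‖ = ∑ j, M i j := by
  rw [Matrix.linfty_opNorm_def]
  obtain ⟨i, -, hi⟩ := Finset.exists_mem_eq_sup (Finset.univ : Finset ι) univ_nonempty
    (fun i : ι => ∑ j, ‖M i j‖₊)
  refine ⟨i, ?_⟩
  rw [hi, NNReal.coe_sum]
  exact Finset.sum_congr rfl fun j _ => by
    simp [Real.norm_of_nonneg (h i j), coe_nnnorm]

end Abstract

section Abstract2

attribute [local instance] Matrix.linftyOpNormedRing Matrix.linftyOpNormedSpace

set_option linter.unusedSectionVars false

variable {ι : Type*} [Fintype ι] [DecidableEq ι] [Nonempty ι]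

/-- entry evaluation as a continuous linear map -/
noncomputable def entryCLM (i j : ι) : Matrix ι ι ℝ →L[ℝ] ℝ :=
  LinearMap.mkContinuous
    { toFun := fun M => M i j
      map_add' := fun M N => rfl
      map_smul' := fun c M => rfl } 1
    (fun M => by rw [one_mul]; exact entry_le_norm M i j)

theorem abstract_green (Q : Matrix ι ι ℝ)
    (hpos : ∀ (n : ℕ) (i j : ι), 0 ≤ (Q ^ n) i j)
    (hrow : ∀ (n : ℕ) (i : ι), ∑ j, (Q ^ n) i j ≤ 1)
    (m : ℕ) (hm : 1 ≤ m) (hsm : ∀ i, ∑ j, (Q ^ m) i j < 1) :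
    (∀ i j : ι, Summable fun n : ℕ => (Q ^ n) i j) ∧
    IsUnit (1 - Q) ∧
    (1 - Q)⁻¹ = Matrix.of fun i j => ∑' n : ℕ, (Q ^ n) i j := by
  -- norms of powers are at most 1
  have hnorm : ∀ n : ℕ, ‖Q ^ n‖ ≤ 1 := by
    intro n
    obtain ⟨i, hi⟩ := norm_eq_of_nonneg (Q ^ n) (hpos n)
    rw [hi]; exact hrow n i
  -- the norm of Q^m is < 1
  have hQm : ‖Q ^ m‖ < 1 := by
    obtain ⟨i, hi⟩ := norm_eq_of_nonneg (Q ^ m) (hpos m)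
    rw [hi]; exact hsm i
  set c : ℝ := max ‖Q ^ m‖ 2⁻¹ with hc
  have hc0 : 0 < c := lt_max_of_lt_right (by norm_num)
  have hc1 : c < 1 := max_lt hQm (by norm_num)
  have hcm : ‖Q ^ m‖ ≤ c := le_max_left _ _
  -- key power bound
  have hkey : ∀ n : ℕ, ‖Q ^ n‖ ≤ c ^ (n / m) := by
    intro n
    rcases Nat.eq_zero_or_pos (n / m) with h0 | h0
    · rw [h0, pow_zero]; exact hnorm n
    · have hdecomp : Q ^ n = (Q ^ m) ^ (n / m) * Q ^ (n % m) := by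
        rw [← pow_mul, ← pow_add, Nat.div_add_mod]
      calc ‖Q ^ n‖ ≤ ‖(Q ^ m) ^ (n / m)‖ * ‖Q ^ (n % m)‖ := by
            rw [hdecomp]; exact norm_mul_le _ _
        _ ≤ ‖Q ^ m‖ ^ (n / m) * 1 :=
            mul_le_mul (norm_pow_le' _ h0) (hnorm _) (norm_nonneg _) (by positivity)
        _ ≤ c ^ (n / m) := by
            rw [mul_one]; exact pow_le_pow_left₀ (norm_nonneg _) hcm _
  -- geometric comparison
  set r : ℝ := c ^ ((1 : ℝ) / m) with hr
  have hr0 : 0 < r := Real.rpow_pos_of_pos hc0 _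
  have hr1 : r < 1 := Real.rpow_lt_one hc0.le hc1 (by positivity)
  have hbound : ∀ n : ℕ, ‖Q ^ n‖ ≤ c⁻¹ * r ^ n := by
    intro n
    have h1 : ((n : ℝ) / m - 1) ≤ ((n / m : ℕ) : ℝ) := by
      have h2 : (n : ℝ) < ((n / m : ℕ) + 1) * m := by
        have hmod : n % m < m := Nat.mod_lt _ hm
        have hdm : m * (n / m) + n % m = n := Nat.div_add_mod n m
        have h2n : n < (n / m + 1) * m := by
          calc n = m * (n / m) + n % m := hdm.symm
            _ < m * (n / m) + m := Nat.add_lt_add_left hmod _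
            _ = (n / m + 1) * m := by ring
        exact_mod_cast h2n
      have hmpos : (0 : ℝ) < m := by exact_mod_cast hm
      rw [div_sub_one hmpos.ne', div_le_iff₀ hmpos]
      nlinarith
    have h3 : c ^ (((n / m : ℕ)) : ℝ) ≤ c ^ ((n : ℝ) / m - 1) :=
      Real.rpow_le_rpow_of_exponent_ge hc0 hc1.le h1
    have h4 : c ^ ((n : ℝ) / m - 1) = c⁻¹ * r ^ n := by
      rw [Real.rpow_sub hc0, Real.rpow_one, hr, ← Real.rpow_natCast (c ^ ((1:ℝ)/m)) n,
        ← Real.rpow_mul hc0.le]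
      ring_nf
    calc ‖Q ^ n‖ ≤ c ^ (n / m) := hkey n
      _ = c ^ (((n / m : ℕ)) : ℝ) := by rw [Real.rpow_natCast]
      _ ≤ c ^ ((n : ℝ) / m - 1) := h3
      _ = c⁻¹ * r ^ n := h4
  have hsumnorm : Summable fun n : ℕ => ‖Q ^ n‖ :=
    Summable.of_nonneg_of_le (fun n => norm_nonneg _) hbound
      ((summable_geometric_of_lt_one hr0.le hr1).mul_left _)
  have hsumQ : Summable fun n : ℕ => Q ^ n := hsumnorm.of_norm
  set S : Matrix ι ι ℝ := ∑' n : ℕ, Q ^ n with hS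
  have hSsum : HasSum (fun n : ℕ => Q ^ n) S := hsumQ.hasSum
  have htend : Filter.Tendsto (fun n : ℕ => Q ^ n) Filter.atTop (nhds 0) :=
    hsumQ.tendsto_atTop_zero
  -- telescoping: HasSum (fun n => Q^n - Q^(n+1)) 1
  have htel : HasSum (fun n : ℕ => Q ^ n - Q ^ (n + 1)) 1 := by
    have hs : Summable fun n : ℕ => Q ^ n - Q ^ (n + 1) :=
      hsumQ.sub (hsumQ.comp_injective (add_left_injective 1))
    rw [hs.hasSum_iff_tendsto_nat]
    have : ∀ n : ℕ, ∑ i ∈ Finset.range n, (Q ^ i - Q ^ (i + 1)) = Q ^ 0 - Q ^ n :=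
      fun n => Finset.sum_range_sub' (fun i => Q ^ i) n
    simp only [this, pow_zero]
    simpa using (Filter.Tendsto.const_sub (1 : Matrix ι ι ℝ) htend)
  have hright : S * (1 - Q) = 1 := by
    have h1 : HasSum (fun n : ℕ => (Q ^ n) * (1 - Q)) (S * (1 - Q)) := hSsum.mul_right _
    have h2 : (fun n : ℕ => (Q ^ n) * (1 - Q)) = fun n : ℕ => Q ^ n - Q ^ (n + 1) := by
      funext n; rw [mul_sub, mul_one, ← pow_succ]
    rw [h2] at h1
    exact h1.unique htel
  have hleft : (1 - Q) * S = 1 := by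
    have h1 : HasSum (fun n : ℕ => (1 - Q) * (Q ^ n)) ((1 - Q) * S) := hSsum.mul_left _
    have h2 : (fun n : ℕ => (1 - Q) * (Q ^ n)) = fun n : ℕ => Q ^ n - Q ^ (n + 1) := by
      funext n; rw [sub_mul, one_mul, ← pow_succ']
    rw [h2] at h1
    exact h1.unique htel
  have hentry : ∀ i j : ι, HasSum (fun n : ℕ => (Q ^ n) i j) (S i j) := by
    intro i j
    exact (entryCLM i j).hasSum hSsum
  refine ⟨fun i j => (hentry i j).summable, ⟨⟨1 - Q, S, hleft, hright⟩, rfl⟩, ?_⟩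
  rw [Matrix.inv_eq_right_inv hleft]
  ext i j
  exact ((hentry i j).tsum_eq).symm

end Abstract2


/-- The `A × A` submatrix of `P`. -/
def subMatrix {X : Type*} (P : Matrix X X ℝ) (A : Finset X) : Matrix A A ℝ :=
  Matrix.of fun x y => P x.1 y.1

/-- For every nonempty proper subset `A ⊊ X`, the series `∑ₙ (P_A)ⁿ`
converges entrywise, `I_A − P_A` is invertible, and `(I_A − P_A)⁻¹ = ∑ₙ (P_A)ⁿ`. -/
theorem green_kernel_series {X : Type*} [Fintype X] [DecidableEq X]
    (P : Matrix X X ℝ)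
    (hcard : 1 < Fintype.card X)
    (hnonneg : ∀ x y, 0 ≤ P x y)
    (hrow : ∀ x, ∑ y, P x y = 1)
    (hirr : ∀ x y, ∃ n, 1 ≤ n ∧ 0 < (P ^ n) x y)
    (A : Finset X) (hA : A.Nonempty) (hA' : A ≠ Finset.univ) :
    (∀ x y : A, Summable fun n : ℕ => ((subMatrix P A) ^ n) x y) ∧
    IsUnit (1 - subMatrix P A) ∧
    (1 - subMatrix P A)⁻¹ = Matrix.of fun x y => ∑' n : ℕ, ((subMatrix P A) ^ n) x y := by
  classical
  haveI : Nonempty {x // x ∈ A} := hA.to_subtype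
  set Q := subMatrix P A with hQdef
  have Ppow_nonneg : ∀ (n : ℕ) x y, 0 ≤ (P ^ n) x y := by
    intro n
    induction n with
    | zero =>
      intro x y
      by_cases h : x = y <;> simp [Matrix.one_apply, h]
    | succ n ih =>
      intro x y
      rw [pow_succ, Matrix.mul_apply]
      exact Finset.sum_nonneg fun z _ => mul_nonneg (ih x z) (hnonneg z y)
  have Ppow_row : ∀ (n : ℕ) x, ∑ y, (P ^ n) x y = 1 := by
    intro n
    induction n with
    | zero => intro x; simp [Matrix.one_apply]
    | succ n ih =>
      intro x
      simp_rw [pow_succ, Matrix.mul_apply]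
      rw [Finset.sum_comm]
      calc ∑ z, ∑ y, (P ^ n) x z * P z y
          = ∑ z, (P ^ n) x z * ∑ y, P z y :=
            Finset.sum_congr rfl fun z _ => (Finset.mul_sum _ _ _).symm
        _ = ∑ z, (P ^ n) x z := by simp [hrow]
        _ = 1 := ih x
  have Qpow : ∀ (n : ℕ) (x y : A), 0 ≤ (Q ^ n) x y ∧ (Q ^ n) x y ≤ (P ^ n) x.1 y.1 := by
    intro n
    induction n with
    | zero =>
      intro x y
      by_cases h : x = y
      · have h' : x.1 = y.1 := by rw [h]
        simp [Matrix.one_apply, h, h']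
      · have h' : x.1 ≠ y.1 := fun hc => h (Subtype.ext hc)
        simp [Matrix.one_apply, h, h']
    | succ n ih =>
      intro x y
      rw [pow_succ, pow_succ, Matrix.mul_apply, Matrix.mul_apply]
      constructor
      · exact Finset.sum_nonneg fun z _ => mul_nonneg (ih x z).1 (hnonneg z.1 y.1)
      · calc ∑ z : A, (Q ^ n) x z * Q z y
            ≤ ∑ z : A, (P ^ n) x.1 z.1 * P z.1 y.1 :=
              Finset.sum_le_sum fun z _ =>
                mul_le_mul_of_nonneg_right (ih x z).2 (hnonneg z.1 y.1)
          _ = ∑ z ∈ A, (P ^ n) x.1 z * P z y.1 :=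
              Finset.sum_coe_sort A (fun z => (P ^ n) x.1 z * P z y.1)
          _ ≤ ∑ z, (P ^ n) x.1 z * P z y.1 :=
              Finset.sum_le_sum_of_subset_of_nonneg (Finset.subset_univ A)
                (fun z _ _ => mul_nonneg (Ppow_nonneg n x.1 z) (hnonneg z y.1))
  have Qrow : ∀ (n : ℕ) (i : A), ∑ j, (Q ^ n) i j ≤ 1 := by
    intro n i
    calc ∑ j : A, (Q ^ n) i j ≤ ∑ j : A, (P ^ n) i.1 j.1 :=
          Finset.sum_le_sum fun j _ => (Qpow n i j).2
      _ = ∑ j ∈ A, (P ^ n) i.1 j := Finset.sum_coe_sort A (fun j => (P ^ n) i.1 j)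
      _ ≤ ∑ j, (P ^ n) i.1 j :=
          Finset.sum_le_sum_of_subset_of_nonneg (Finset.subset_univ A)
            (fun j _ _ => Ppow_nonneg n i.1 j)
      _ = 1 := Ppow_row n i.1
  obtain ⟨y0, hy0⟩ : ∃ y0, y0 ∉ A := by
    by_contra h
    push_neg at h
    exact hA' (Finset.eq_univ_iff_forall.mpr h)
  have hesc : ∀ i : A, ∃ n, 1 ≤ n ∧ ∑ j, (Q ^ n) i j < 1 := by
    intro i
    obtain ⟨n, hn1, hn2⟩ := hirr i.1 y0
    refine ⟨n, hn1, ?_⟩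
    have hsub : A ⊆ Finset.univ.erase y0 := fun z hz =>
      Finset.mem_erase.mpr ⟨fun hc => hy0 (hc ▸ hz), Finset.mem_univ z⟩
    have h1 : ∑ j : A, (Q ^ n) i j ≤ ∑ j ∈ A, (P ^ n) i.1 j := by
      calc ∑ j : A, (Q ^ n) i j ≤ ∑ j : A, (P ^ n) i.1 j.1 :=
            Finset.sum_le_sum fun j _ => (Qpow n i j).2
        _ = ∑ j ∈ A, (P ^ n) i.1 j := Finset.sum_coe_sort A (fun j => (P ^ n) i.1 j)
    have h2 : ∑ j ∈ A, (P ^ n) i.1 j ≤ ∑ j ∈ Finset.univ.erase y0, (P ^ n) i.1 j :=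
      Finset.sum_le_sum_of_subset_of_nonneg hsub (fun j _ _ => Ppow_nonneg n i.1 j)
    have h3 : ∑ j ∈ Finset.univ.erase y0, (P ^ n) i.1 j
        = (∑ j, (P ^ n) i.1 j) - (P ^ n) i.1 y0 :=
      Finset.sum_erase_eq_sub (Finset.mem_univ y0)
    have h4 : (∑ j, (P ^ n) i.1 j) = 1 := Ppow_row n i.1
    linarith
  have Qmono : ∀ (k l : ℕ) (i : A), ∑ j, (Q ^ (k + l)) i j ≤ ∑ j, (Q ^ k) i j := by
    intro k l i
    rw [pow_add]
    simp_rw [Matrix.mul_apply]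
    rw [Finset.sum_comm]
    calc ∑ z : A, ∑ j : A, (Q ^ k) i z * (Q ^ l) z j
        = ∑ z : A, (Q ^ k) i z * ∑ j : A, (Q ^ l) z j :=
          Finset.sum_congr rfl fun z _ => (Finset.mul_sum _ _ _).symm
      _ ≤ ∑ z : A, (Q ^ k) i z * 1 :=
          Finset.sum_le_sum fun z _ =>
            mul_le_mul_of_nonneg_left (Qrow l z) (Qpow k i z).1
      _ = ∑ z : A, (Q ^ k) i z := by simp
  choose f hf1 hf2 using hesc
  set m : ℕ := max (Finset.univ.sup f) 1 with hmdef
  have hm1 : 1 ≤ m := le_max_right _ _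
  have hsm : ∀ i : A, ∑ j, (Q ^ m) i j < 1 := by
    intro i
    have hfi : f i ≤ m := le_trans (Finset.le_sup (Finset.mem_univ i)) (le_max_left _ _)
    obtain ⟨l, hl⟩ := Nat.exists_eq_add_of_le hfi
    calc ∑ j, (Q ^ m) i j = ∑ j, (Q ^ (f i + l)) i j := by rw [← hl]
      _ ≤ ∑ j, (Q ^ (f i)) i j := Qmono (f i) l i
      _ < 1 := hf2 i
  exact abstract_green Q (fun n i j => (Qpow n i j).1) Qrow m hm1 hsm
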